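/- Let N ∈ ℕ and let W⁺ be a probability weighting function. For 1 ≤ k ≤ N write h⁺_{j,k} = W⁺((k−j+1)/N) − W⁺((k−j)/N) for j = 1,…,k, and let J(k) be the transitional index for k gain outcomes. Suppose k ≥ 2 and J(k) ≤ k − 1. Then for every j with J(k) ≤ j ≤ k − 1 it holds that j · h⁺_{j+1,k} ≥ ∑_{j'=1}^{j} h⁺_{j',k}. -/

import Mathlib

open Finset

/-- An inverse S-shaped function on `[0,1]`: strictly increasing, continuously
differentiable, with a derivative strictly decreasing then strictly increasing. -/
def InverseSShaped (W : ℝ → ℝ) : Prop :=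
  StrictMonoOn W (Set.Icc (0 : ℝ) 1) ∧
  ContDiffOn ℝ 1 W (Set.Icc (0 : ℝ) 1) ∧
  ∃ x₀ ∈ Set.Icc (0 : ℝ) 1,
    StrictAntiOn (deriv W) (Set.Icc (0 : ℝ) x₀) ∧ StrictMonoOn (deriv W) (Set.Icc x₀ 1)

/-- A probability weighting function: inverse S-shaped with `W 0 = 0` and `W 1 = 1`. -/
def IsPWF (W : ℝ → ℝ) : Prop :=
  InverseSShaped W ∧ W 0 = 0 ∧ W 1 = 1

/-- Gain decision weights: `h⁺_j = W⁺((n−j+1)/N) − W⁺((n−j)/N)` for `j = 1,…,n`. -/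
noncomputable def gainW (W : ℝ → ℝ) (N n j : ℕ) : ℝ :=
  W (((n : ℝ) - j + 1) / N) - W (((n : ℝ) - j) / N)

/-- The transitional index
`J = min{ j ∈ {1,…,n} : j = n ∨ j·h⁺_{j+1} ≥ ∑_{j'≤j} h⁺_{j'} }`. -/
noncomputable def transIdx (W : ℝ → ℝ) (N n : ℕ) : ℕ :=
  sInf {j : ℕ | 1 ≤ j ∧ j ≤ n ∧
    (j = n ∨ ∑ j' ∈ Finset.Icc 1 j, gainW W N n j' ≤ (j : ℝ) * gainW W N n (j + 1))}

/-- Sign propagation for the derivative of the increment function: once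
`W'(x+δ) ≥ W'(x)`, strictly later we have `W'(y+δ) > W'(y)`. -/
lemma derivSign_prop (W : ℝ → ℝ) (x₀ : ℝ) (hx₀ : x₀ ∈ Set.Icc (0:ℝ) 1)
    (hA : StrictAntiOn (deriv W) (Set.Icc (0:ℝ) x₀))
    (hM : StrictMonoOn (deriv W) (Set.Icc x₀ 1))
    {δ x y : ℝ} (hδ : 0 < δ) (hx : 0 ≤ x) (hxy : x < y) (hy : y + δ ≤ 1)
    (h : deriv W x ≤ deriv W (x + δ)) : deriv W y < deriv W (y + δ) := by
  obtain ⟨hx₀0, hx₀1⟩ := hx₀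
  by_cases hyx₀ : x₀ ≤ y
  · exact hM ⟨hyx₀, by linarith⟩ ⟨by linarith, hy⟩ (by linarith)
  · push_neg at hyx₀
    have hfy : deriv W y < deriv W x :=
      hA ⟨hx, by linarith⟩ ⟨by linarith, by linarith⟩ hxy
    by_cases hxd : x + δ ≤ x₀
    · have : deriv W (x + δ) < deriv W x :=
        hA ⟨hx, by linarith⟩ ⟨by linarith, hxd⟩ (by linarith)
      linarith
    · push_neg at hxd
      have h1 : deriv W (x + δ) < deriv W (y + δ) :=
        hM ⟨by linarith, by linarith⟩ ⟨by linarith, hy⟩ (by linarith)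
      linarith

lemma hasDerivAt_of_pwf {W : ℝ → ℝ} (hcd : ContDiffOn ℝ 1 W (Set.Icc (0:ℝ) 1))
    {p : ℝ} (hp0 : 0 < p) (hp1 : p < 1) : HasDerivAt W (deriv W p) p := by
  have hd : DifferentiableOn ℝ W (Set.Icc (0:ℝ) 1) := hcd.differentiableOn one_ne_zero
  have : DifferentiableAt ℝ W p :=
    (hd p ⟨hp0.le, hp1.le⟩).differentiableAt (Icc_mem_nhds hp0 hp1)
  exact this.hasDerivAt

/-- Key quasiconvexity-type lemma for increments of an inverse-S-shaped function:
if `D(s) ≤ D(t)` for `s < t`, then `D(t) < D(u)` for `t < u`,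
where `D(x) = W(x+δ) − W(x)`. -/
lemma increment_lt (W : ℝ → ℝ) (hW : InverseSShaped W)
    {δ s t u : ℝ} (hδ : 0 < δ) (hs : 0 ≤ s) (hst : s < t) (htu : t < u)
    (hu : u + δ ≤ 1) (h : W (s + δ) - W s ≤ W (t + δ) - W t) :
    W (t + δ) - W t < W (u + δ) - W u := by
  obtain ⟨hmono, hcd, x₀, hx₀, hA, hM⟩ := hW
  set D : ℝ → ℝ := fun x => W (x + δ) - W x with hD
  have hcont : ContinuousOn W (Set.Icc (0:ℝ) 1) := hcd.continuousOn
  have hDd : ∀ x : ℝ, 0 < x → x + δ < 1 →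
      HasDerivAt D (deriv W (x + δ) - deriv W x) x := by
    intro x h0 h1
    have h2 : HasDerivAt (fun y : ℝ => W (y + δ)) (deriv W (x + δ)) x := by
      have hb : HasDerivAt (fun y : ℝ => y + δ) 1 x := (hasDerivAt_id x).add_const δ
      have := (hasDerivAt_of_pwf hcd (by linarith) h1).comp x hb
      simp only [mul_one] at this
      exact this
    exact h2.sub (hasDerivAt_of_pwf hcd h0 (by linarith))
  have hDcont : ∀ a b : ℝ, 0 ≤ a → b + δ ≤ 1 → ContinuousOn D (Set.Icc a b) := by
    intro a b ha hb
    have h1 : ContinuousOn (fun x : ℝ => W (x + δ)) (Set.Icc a b) := by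
      apply hcont.comp ((continuous_id.add continuous_const).continuousOn)
      intro x hx
      have h1 := hx.1; have h2 := hx.2
      exact Set.mem_Icc.mpr ⟨by simpa using by linarith, by simpa using by linarith⟩
    exact h1.sub (hcont.mono (fun x hx => ⟨by linarith [hx.1], by linarith [hx.2, hδ]⟩))
  -- MVT on [s, t]
  obtain ⟨c₁, hc₁, hc₁eq⟩ := exists_hasDerivAt_eq_slope D
    (fun x => deriv W (x + δ) - deriv W x) hst (hDcont s t hs (by linarith))
    (fun x hx => hDd x (by linarith [hx.1]) (by linarith [hx.2]))
  -- MVT on [t, u]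
  obtain ⟨c₂, hc₂, hc₂eq⟩ := exists_hasDerivAt_eq_slope D
    (fun x => deriv W (x + δ) - deriv W x) htu (hDcont t u (by linarith) hu)
    (fun x hx => hDd x (by linarith [hx.1]) (by linarith [hx.2]))
  have hslope1 : 0 ≤ deriv W (c₁ + δ) - deriv W c₁ := by
    rw [hc₁eq]
    apply div_nonneg (by simpa [hD] using h) (by linarith [hst])
  have hkey : deriv W c₂ < deriv W (c₂ + δ) :=
    derivSign_prop W x₀ hx₀ hA hM (δ := δ) (x := c₁) (y := c₂) hδ
      (by linarith [hc₁.1]) (by linarith [hc₁.2, hc₂.1]) (by linarith [hc₂.2])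
      (by linarith)
  have hpos : 0 < (D u - D t) / (u - t) := by rw [← hc₂eq]; linarith
  have hfin := (lt_div_iff₀ (by linarith : (0:ℝ) < u - t)).mp hpos
  simp only [hD] at hfin
  linarith

/-- If the decision weights drop from index `m` to index `m+1`, then every
earlier weight strictly exceeds the weight at `m`. -/
lemma gainW_lt (W : ℝ → ℝ) (hW : InverseSShaped W) {N k i m : ℕ} (hkN : k ≤ N)
    (hN : 0 < N) (hi : 1 ≤ i) (him : i < m) (hmk : m + 1 ≤ k)
    (h : gainW W N k (m + 1) < gainW W N k m) : gainW W N k m < gainW W N k i := by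
  have hNp : (0:ℝ) < N := by exact_mod_cast hN
  have hkN' : (k:ℝ) ≤ N := by exact_mod_cast hkN
  have hmk' : (m:ℝ) + 1 ≤ k := by exact_mod_cast hmk
  have hi' : (1:ℝ) ≤ i := by exact_mod_cast hi
  have him' : (i:ℝ) < m := by exact_mod_cast him
  have hg : ∀ j : ℕ, gainW W N k j = W (((k:ℝ) - j)/N + 1/N) - W (((k:ℝ) - j)/N) := by
    intro j; rw [gainW, ← add_div]
  have e : ((k:ℝ) - ((m:ℕ) + 1 : ℕ)) = (k:ℝ) - m - 1 := by push_cast; ring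
  rw [hg (m+1), hg m, e] at h
  rw [hg m, hg i]
  apply increment_lt W hW (δ := 1/(N:ℝ)) (s := ((k:ℝ) - m - 1)/N)
    (t := ((k:ℝ) - m)/N) (u := ((k:ℝ) - i)/N)
  · positivity
  · apply div_nonneg (by linarith) hNp.le
  · apply div_lt_div_of_pos_right (by linarith) hNp
  · apply div_lt_div_of_pos_right (by linarith) hNp
  · rw [← add_div, div_le_one hNp]; linarith
  · exact h.le

/-- if `k ≥ 2` and `J(k) ≤ k−1`, then for every `J(k) ≤ j ≤ k−1`
one has `j·h⁺_{j+1,k} ≥ ∑_{j'≤j} h⁺_{j',k}`. -/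
theorem exceed_average (W : ℝ → ℝ) (N k : ℕ)
    (hW : IsPWF W) (hkN : k ≤ N) (hk2 : 2 ≤ k) (hJ : transIdx W N k ≤ k - 1) :
    ∀ j : ℕ, transIdx W N k ≤ j → j ≤ k - 1 →
      ∑ j' ∈ Finset.Icc 1 j, gainW W N k j' ≤ (j : ℝ) * gainW W N k (j + 1) := by
  obtain ⟨hIS, h0, h1⟩ := hW
  have hN : 0 < N := by omega
  have hmem : transIdx W N k ∈ {j : ℕ | 1 ≤ j ∧ j ≤ k ∧
      (j = k ∨ ∑ j' ∈ Finset.Icc 1 j, gainW W N k j' ≤ (j : ℝ) * gainW W N k (j + 1))} := by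
    rw [transIdx]
    exact Nat.sInf_mem ⟨k, by omega, le_rfl, Or.inl rfl⟩
  obtain ⟨hJ1, hJk, hJor⟩ := hmem
  have hbase : ∑ j' ∈ Finset.Icc 1 (transIdx W N k), gainW W N k j' ≤
      ((transIdx W N k : ℕ) : ℝ) * gainW W N k (transIdx W N k + 1) :=
    hJor.resolve_left (by omega)
  intro j hJj
  induction j, hJj using Nat.le_induction with
  | base => intro _; exact hbase
  | succ n hJn ih =>
    intro hnk1
    have hJ1n : 1 ≤ n := le_trans hJ1 hJn
    have ihn := ih (by omega)
    have hstep : gainW W N k (n + 1) ≤ gainW W N k (n + 2) := by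
      by_contra hcon
      push_neg at hcon
      have hlt : ∀ i ∈ Finset.Icc 1 n, gainW W N k (n + 1) < gainW W N k i := by
        intro i hi
        simp only [Finset.mem_Icc] at hi
        exact gainW_lt W hIS hkN hN hi.1 (by omega) (by omega) hcon
      have hcard : (Finset.Icc 1 n).card = n := by rw [Nat.card_Icc]; omega
      have hsum := Finset.sum_lt_sum_of_nonempty
        (by rw [Finset.nonempty_Icc]; omega) hlt
      rw [Finset.sum_const, hcard, nsmul_eq_mul] at hsum
      linarith
    rw [Finset.sum_Icc_succ_top (by omega : 1 ≤ n + 1)]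
    have hn0 : (0:ℝ) ≤ (n:ℝ) + 1 := by positivity
    have h2 := mul_le_mul_of_nonneg_left hstep hn0
    push_cast
    linarith
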